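/- Let T : ℝⁿ → ℝⁿ be nonexpansive in the sup-norm and order-monotone (U ≤ V componentwise implies T U ≤ T V). Let β_k = 1/(k+1) and define U^k = β_k U^0 + (1 - β_k) T U^{k-1} for k ≥ 1. If U^0 ≤ T U^0 componentwise, then for all k ≥ 1: U^{k-1} ≤ U^k ≤ T U^{k-1} ≤ T U^k componentwise. -/

import Mathlib

theorem stmt_5 (n : ℕ) (hn : 0 < n)
    (T : (Fin n → ℝ) → (Fin n → ℝ))
    (hT : ∀ x y : Fin n → ℝ, ‖T x - T y‖ ≤ ‖x - y‖)
    (hmono : ∀ x y : Fin n → ℝ, x ≤ y → T x ≤ T y)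
    (β : ℕ → ℝ) (hβ : ∀ k, β k = 1 / (k+1 : ℝ))
    (U : ℕ → Fin n → ℝ)
    (hU : ∀ k : ℕ, U (k+1) = β (k+1) • U 0 + (1 - β (k+1)) • T (U k))
    (h0 : U 0 ≤ T (U 0)) :
    ∀ k : ℕ, 1 ≤ k →
      U (k-1) ≤ U k ∧ U k ≤ T (U (k-1)) ∧ T (U (k-1)) ≤ T (U k) := by
  have key : ∀ k : ℕ, U 0 ≤ U k ∧ U k ≤ U (k+1) ∧ U (k+1) ≤ T (U k) := by
    intro k
    induction k with
    | zero =>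
      have hb : β 1 = 1/2 := by rw [hβ]; norm_num
      have h1 : ∀ i, U 1 i = β 1 * U 0 i + (1 - β 1) * T (U 0) i := by
        intro i
        rw [hU 0]
        simp [Pi.add_apply, Pi.smul_apply, smul_eq_mul]
      refine ⟨le_refl _, ?_, ?_⟩ <;>
      · intro i
        have := h0 i
        have h1i := h1 i
        rw [hb] at h1i
        rw [show (0:ℕ)+1 = 1 from rfl] at *
        linarith [h1i]
    | succ k ih =>
      obtain ⟨h0k, hk, hkT⟩ := ih
      have hmonoT : T (U k) ≤ T (U (k+1)) := hmono _ _ hk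
      have h01 : U 0 ≤ U (k+1) := le_trans h0k hk
      have h0T : U 0 ≤ T (U k) := le_trans h01 hkT
      set a := β (k+1) with ha
      set b := β (k+2) with hb
      have hav : a = 1/((k:ℝ)+2) := by rw [ha, hβ]; push_cast; ring_nf
      have hbv : b = 1/((k:ℝ)+3) := by rw [hb, hβ]; push_cast; ring_nf
      have hk2 : (0:ℝ) < (k:ℝ)+2 := by positivity
      have hk3 : (0:ℝ) < (k:ℝ)+3 := by positivity
      have hbpos : 0 < b := by rw [hbv]; positivity
      have hba : b ≤ a := by
        rw [hav, hbv]
        apply div_le_div_of_nonneg_left (by norm_num) hk2 (by linarith)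
      have ha1 : a ≤ 1 := by
        rw [hav]
        rw [div_le_one hk2]; linarith
      have e1 : ∀ i, U (k+1) i = a * U 0 i + (1 - a) * T (U k) i := by
        intro i; rw [hU k]
        simp [Pi.add_apply, Pi.smul_apply, smul_eq_mul]
        rfl
      have e2 : ∀ i, U (k+2) i = b * U 0 i + (1 - b) * T (U (k+1)) i := by
        intro i; rw [hU (k+1)]
        simp [Pi.add_apply, Pi.smul_apply, smul_eq_mul]
        rfl
      refine ⟨h01, ?_, ?_⟩
      · intro i
        have e1i := e1 i
        have e2i := e2 i
        have hu := h0T i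
        have ht := hmonoT i
        rw [show k+1+1 = k+2 from rfl, e2i, e1i]
        nlinarith [mul_nonneg (sub_nonneg.2 hba) (sub_nonneg.2 hu)]
      · intro i
        have e2i := e2 i
        have hu : U 0 i ≤ T (U (k+1)) i := le_trans (h0T i) (hmonoT i)
        rw [show k+1+1 = k+2 from rfl, e2i]
        nlinarith [mul_nonneg hbpos.le (sub_nonneg.2 hu)]
  intro k hk
  obtain ⟨m, rfl⟩ := Nat.exists_eq_add_of_le hk
  obtain ⟨h0m, hm, hmT⟩ := key m
  have : 1 + m - 1 = m := by omega
  rw [this, Nat.add_comm 1 m]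
  exact ⟨hm, hmT, hmono _ _ hm⟩
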